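/- The number x = Σ_{k=1}^∞ ε_k/(q_1 q_2 ⋯ q_k) is rational if and only if there exist an integer n ≥ 0 and a positive integer m such that the tail sums satisfy Σ_{k=n+1}^∞ ε_k/(q_1 q_2 ⋯ q_k) = (q_{n+1} q_{n+2} ⋯ q_{n+m}) · Σ_{k=n+m+1}^∞ ε_k/(q_1 q_2 ⋯ q_k). -/

import Mathlib

/-- The tail sum `Σ_{k=n+1}^∞ ε_k/(q_1 q_2 ⋯ q_k)` of the Cantor series with bases `q`
and digits `ε`; the full Cantor series value is the tail at `n = 0`. -/
noncomputable def cantorTail (q ε : ℕ → ℕ) (n : ℕ) : ℝ :=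
  ∑' k : ℕ, (ε (n + k + 1) : ℝ) / ∏ i ∈ Finset.Icc 1 (n + k + 1), (q i : ℝ)

namespace CantorProofAux

noncomputable def P (q : ℕ → ℕ) (n : ℕ) : ℝ := ∏ i ∈ Finset.Icc 1 n, (q i : ℝ)

variable (q ε : ℕ → ℕ)

lemma P_zero : P q 0 = 1 := by simp [P]

lemma P_succ (n : ℕ) : P q (n + 1) = P q n * q (n + 1) := by
  simp [P, Finset.prod_Icc_succ_top (Nat.le_add_left 1 n)]

lemma P_nonneg (n : ℕ) : 0 ≤ P q n :=
  Finset.prod_nonneg fun _ _ => Nat.cast_nonneg _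

lemma P_pos (hq : ∀ k, 1 ≤ k → 2 ≤ q k) (n : ℕ) : 0 < P q n := by
  refine Finset.prod_pos fun i hi => ?_
  have := hq i (Finset.mem_Icc.1 hi).1
  positivity

lemma two_pow_le_P (hq : ∀ k, 1 ≤ k → 2 ≤ q k) (n : ℕ) : (2:ℝ) ^ n ≤ P q n := by
  induction n with
  | zero => simp [P]
  | succ n ih =>
    rw [P_succ, pow_succ]
    have h2 : (2:ℝ) ≤ q (n + 1) := by exact_mod_cast hq (n + 1) (by omega)
    have := P_pos q hq n
    gcongr

lemma P_split (n m : ℕ) :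
    P q (n + m) = P q n * ∏ i ∈ Finset.Icc (n + 1) (n + m), (q i : ℝ) := by
  unfold P
  rw [show Finset.Icc 1 (n + m) = Finset.Ioc 0 (n + m) from Finset.Icc_add_one_left_eq_Ioc 0 (n+m),
      show Finset.Icc 1 n = Finset.Ioc 0 n from Finset.Icc_add_one_left_eq_Ioc 0 n,
      show Finset.Icc (n+1) (n+m) = Finset.Ioc n (n+m) from Finset.Icc_add_one_left_eq_Ioc n (n+m)]
  rw [← Finset.prod_Ioc_consecutive _ (Nat.zero_le n) (Nat.le_add_right n m)]

lemma tail_eq (n : ℕ) :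
    cantorTail q ε n = ∑' k : ℕ, (ε (n + k + 1) : ℝ) / P q (n + k + 1) := rfl

lemma tail_nonneg (n : ℕ) : 0 ≤ cantorTail q ε n := by
  rw [tail_eq]
  exact tsum_nonneg fun k => div_nonneg (Nat.cast_nonneg _) (P_nonneg q _)

variable (hq : ∀ k, 1 ≤ k → 2 ≤ q k) (hε : ∀ k, 1 ≤ k → ε k ≤ q k - 1)

include hq hε in
lemma term_le (j : ℕ) : (ε (j + 1) : ℝ) / P q (j + 1) ≤ 1 / P q j := by
  have hP := P_pos q hq j
  have hq1 : (2:ℝ) ≤ q (j + 1) := by exact_mod_cast hq (j+1) (by omega)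
  have hqpos : (0:ℝ) < q (j + 1) := by linarith
  have hεle : (ε (j + 1) : ℝ) ≤ q (j + 1) := by
    have := (hε (j+1) (by omega)).trans (Nat.sub_le _ _)
    exact_mod_cast this
  rw [P_succ, div_le_div_iff₀ (by positivity) hP]
  calc (ε (j+1) : ℝ) * P q j ≤ (q (j+1) : ℝ) * P q j := by gcongr
    _ = 1 * (P q j * q (j+1)) := by ring

include hq hε in
lemma summable_tail (n : ℕ) :
    Summable (fun k : ℕ => (ε (n + k + 1) : ℝ) / P q (n + k + 1)) := by
  have hg : Summable (fun k : ℕ => (1/2:ℝ)^k) :=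
    summable_geometric_of_lt_one (by norm_num) (by norm_num)
  refine Summable.of_nonneg_of_le
    (fun k => div_nonneg (Nat.cast_nonneg _) (P_nonneg q _)) (fun k => ?_) hg
  calc (ε (n + k + 1) : ℝ) / P q (n + k + 1) ≤ 1 / P q (n + k) := term_le q ε hq hε (n+k)
      _ ≤ 1 / (2:ℝ)^(n+k) :=
          one_div_le_one_div_of_le (by positivity) (two_pow_le_P q hq (n+k))
      _ = (1/2:ℝ)^(n+k) := by rw [div_pow, one_pow]
      _ ≤ (1/2:ℝ)^k :=
          pow_le_pow_of_le_one (by norm_num) (by norm_num) (Nat.le_add_left k n)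

include hq hε in
lemma tail_succ (n : ℕ) :
    cantorTail q ε n = (ε (n + 1) : ℝ) / P q (n + 1) + cantorTail q ε (n + 1) := by
  rw [tail_eq, tail_eq, Summable.tsum_eq_zero_add (summable_tail q ε hq hε n)]
  congr 1
  apply tsum_congr; intro k
  have h : n + (k + 1) + 1 = n + 1 + k + 1 := by omega
  rw [h]

include hq hε in
lemma sum_range_le (n K : ℕ) :
    ∑ k ∈ Finset.range K, (ε (n + k + 1) : ℝ) / P q (n + k + 1)
      ≤ 1 / P q n - 1 / P q (n + K) := by
  induction K with
  | zero => simp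
  | succ K ih =>
    rw [Finset.sum_range_succ]
    have hterm : (ε (n + K + 1) : ℝ) / P q (n + K + 1)
        ≤ 1 / P q (n + K) - 1 / P q (n + K + 1) := by
      have hP := P_pos q hq (n + K)
      have hq2 : (2:ℝ) ≤ q (n + K + 1) := by exact_mod_cast hq (n + K + 1) (by omega)
      have hqpos : (0:ℝ) < q (n + K + 1) := by linarith
      have hεle : (ε (n + K + 1) : ℝ) ≤ (q (n + K + 1) : ℝ) - 1 := by
        have h1 := hε (n + K + 1) (by omega)
        have h2 : 1 ≤ q (n + K + 1) := by have := hq (n+K+1) (by omega); omega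
        have h3 : (ε (n + K + 1) : ℝ) ≤ ((q (n + K + 1) - 1 : ℕ) : ℝ) := Nat.cast_le.2 h1
        rwa [Nat.cast_sub h2, Nat.cast_one] at h3
      rw [P_succ]
      have hsub : 1 / P q (n + K) - 1 / (P q (n + K) * q (n + K + 1))
          = ((q (n + K + 1) : ℝ) - 1) / (P q (n + K) * q (n + K + 1)) := by
        field_simp
      rw [hsub]
      gcongr
    have h : n + (K+1) = n + K + 1 := by omega
    rw [h]
    linarith

include hq hε in
lemma tail_le (n : ℕ) : cantorTail q ε n ≤ 1 / P q n := by
  rw [tail_eq]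
  refine Summable.tsum_le_of_sum_le (summable_tail q ε hq hε n) fun s => ?_
  have hsub : s ⊆ Finset.range (s.sup id + 1) := fun k hk =>
    Finset.mem_range.2 (Nat.lt_succ_of_le (Finset.le_sup (f := id) hk))
  calc ∑ k ∈ s, (ε (n + k + 1) : ℝ) / P q (n + k + 1)
      ≤ ∑ k ∈ Finset.range (s.sup id + 1), (ε (n + k + 1) : ℝ) / P q (n + k + 1) :=
        Finset.sum_le_sum_of_subset_of_nonneg hsub
          (fun k _ _ => div_nonneg (Nat.cast_nonneg _) (P_nonneg q _))
    _ ≤ 1 / P q n - 1 / P q (n + (s.sup id + 1)) := sum_range_le q ε hq hε n _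
    _ ≤ 1 / P q n := by
        have := P_pos q hq (n + (s.sup id + 1))
        have : 0 < 1 / P q (n + (s.sup id + 1)) := by positivity
        linarith

include hq hε in
lemma R_iter (n m : ℕ) : ∃ N : ℤ,
    P q (n + m) * cantorTail q ε (n + m)
      = ((∏ i ∈ Finset.Icc (n + 1) (n + m), q i : ℕ) : ℝ) * (P q n * cantorTail q ε n)
        - (N : ℝ) := by
  induction m with
  | zero => exact ⟨0, by simp⟩
  | succ m ih =>
    obtain ⟨N, hN⟩ := ih
    refine ⟨(q (n + m + 1) : ℤ) * N + (ε (n + m + 1) : ℤ), ?_⟩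
    have hrec := tail_succ q ε hq hε (n + m)
    have hPpos := P_pos q hq (n + m + 1)
    have hsplit : P q (n + m + 1) * cantorTail q ε (n + m + 1)
        = (q (n + m + 1) : ℝ) * (P q (n + m) * cantorTail q ε (n + m)) - ε (n + m + 1) := by
      have : cantorTail q ε (n + m + 1)
          = cantorTail q ε (n + m) - (ε (n + m + 1) : ℝ) / P q (n + m + 1) := by
        linarith
      rw [this, P_succ]
      have hP' : P q (n + m) ≠ 0 := (P_pos q hq (n + m)).ne'
      have hq0 : (q (n + m + 1) : ℝ) ≠ 0 := by
        have := hq (n + m + 1) (by omega); positivity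
      field_simp
    have hprod : (∏ i ∈ Finset.Icc (n + 1) (n + m + 1), q i)
        = (∏ i ∈ Finset.Icc (n + 1) (n + m), q i) * q (n + m + 1) :=
      Finset.prod_Icc_succ_top (by omega) _
    have h1 : n + (m + 1) = n + m + 1 := by omega
    rw [h1, hsplit, hN, hprod]
    push_cast
    ring

include hq in
lemma R_nonneg (n : ℕ) : 0 ≤ P q n * cantorTail q ε n :=
  mul_nonneg (P_pos q hq n).le (tail_nonneg q ε n)

include hq hε in
lemma R_le_one (n : ℕ) : P q n * cantorTail q ε n ≤ 1 := by
  have h := tail_le q ε hq hε n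
  have hP := P_pos q hq n
  calc P q n * cantorTail q ε n ≤ P q n * (1 / P q n) := by gcongr
    _ = 1 := by field_simp

end CantorProofAux

open CantorProofAux in
/-- `x = Σ_{k=1}^∞ ε_k/(q_1 ⋯ q_k)` is rational iff there exist `n ≥ 0`
and `m ≥ 1` such that
`Σ_{k=n+1}^∞ ε_k/(q_1 ⋯ q_k) = (q_{n+1} ⋯ q_{n+m}) · Σ_{k=n+m+1}^∞ ε_k/(q_1 ⋯ q_k)`. -/
theorem cantor_rational_iff_tail_eq
    (q : ℕ → ℕ) (hq : ∀ k, 1 ≤ k → 2 ≤ q k)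
    (ε : ℕ → ℕ) (hε : ∀ k, 1 ≤ k → ε k ≤ q k - 1)
    (x : ℝ) (hx : x = cantorTail q ε 0) :
    (∃ a : ℚ, x = (a : ℝ)) ↔
    (∃ n m : ℕ, 0 < m ∧
      cantorTail q ε n =
        (∏ i ∈ Finset.Icc (n + 1) (n + m), (q i : ℝ)) * cantorTail q ε (n + m)) := by
  constructor
  · rintro ⟨a, hxa⟩
    have hRx : ∀ n : ℕ, ∃ N : ℤ,
        P q n * cantorTail q ε n = ((∏ i ∈ Finset.Icc 1 n, q i : ℕ) : ℝ) * x - (N : ℝ) := by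
      intro n
      obtain ⟨N, hN⟩ := R_iter q ε hq hε 0 n
      refine ⟨N, ?_⟩
      simp only [Nat.zero_add, zero_add] at hN
      rwa [P_zero, one_mul, ← hx] at hN
    have hden : (a.den : ℝ) * x = (a.num : ℝ) := by
      have hd : (a.den : ℝ) ≠ 0 := Nat.cast_ne_zero.2 a.den_nz
      rw [hxa, Rat.cast_def]
      field_simp
    have key : ∀ n : ℕ, ∃ z : ℤ, (z : ℝ) = (a.den : ℝ) * (P q n * cantorTail q ε n) := by
      intro n
      obtain ⟨N, hN⟩ := hRx n
      refine ⟨((∏ i ∈ Finset.Icc 1 n, q i : ℕ) : ℤ) * a.num - (a.den : ℤ) * N, ?_⟩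
      rw [hN, mul_sub,
        show (a.den : ℝ) * (((∏ i ∈ Finset.Icc 1 n, q i : ℕ) : ℝ) * x)
          = ((∏ i ∈ Finset.Icc 1 n, q i : ℕ) : ℝ) * ((a.den : ℝ) * x) by ring, hden]
      push_cast
      ring
    choose z hz using key
    have hmem : ∀ n, z n ∈ Finset.Icc (0 : ℤ) (a.den : ℤ) := by
      intro n
      rw [Finset.mem_Icc]
      constructor
      · have h0 : (0:ℝ) ≤ (z n : ℝ) := by
          rw [hz]; exact mul_nonneg (Nat.cast_nonneg _) (R_nonneg q ε hq n)
        exact_mod_cast h0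
      · have h1 : (z n : ℝ) ≤ (a.den : ℝ) := by
          rw [hz]
          calc (a.den : ℝ) * (P q n * cantorTail q ε n) ≤ (a.den : ℝ) * 1 :=
                mul_le_mul_of_nonneg_left (R_le_one q ε hq hε n) (Nat.cast_nonneg _)
            _ = (a.den : ℝ) := mul_one _
        exact_mod_cast h1
    obtain ⟨n₁, n₂, hne, hzz⟩ := Finite.exists_ne_map_eq_of_infinite
      (fun n : ℕ => (⟨z n, hmem n⟩ : {y // y ∈ Finset.Icc (0 : ℤ) (a.den : ℤ)}))
    have hzz' : z n₁ = z n₂ := congrArg Subtype.val hzz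
    have main2 : ∀ m₁ m₂ : ℕ, m₁ < m₂ → z m₁ = z m₂ →
        ∃ n m : ℕ, 0 < m ∧
          cantorTail q ε n =
            (∏ i ∈ Finset.Icc (n + 1) (n + m), (q i : ℝ)) * cantorTail q ε (n + m) := by
      intro m₁ m₂ hlt hzeq
      refine ⟨m₁, m₂ - m₁, by omega, ?_⟩
      have hd : (a.den : ℝ) ≠ 0 := Nat.cast_ne_zero.2 a.den_nz
      have hReq : P q m₁ * cantorTail q ε m₁ = P q m₂ * cantorTail q ε m₂ := by
        have := hz m₁
        rw [hzeq, hz m₂] at this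
        exact mul_left_cancel₀ hd this.symm
      have hm2 : m₁ + (m₂ - m₁) = m₂ := by omega
      rw [hm2]
      have hPsp := P_split q m₁ (m₂ - m₁)
      rw [hm2] at hPsp
      rw [hPsp] at hReq
      have hPn := (P_pos q hq m₁).ne'
      rw [mul_assoc] at hReq
      exact mul_left_cancel₀ hPn hReq
    rcases lt_or_gt_of_ne hne with h | h
    · exact main2 n₁ n₂ h hzz'
    · exact main2 n₂ n₁ h hzz'.symm
  · rintro ⟨n, m, hm, heq⟩
    obtain ⟨N, hN⟩ := R_iter q ε hq hε n m
    obtain ⟨N0, hN0⟩ := R_iter q ε hq hε 0 n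
    simp only [Nat.zero_add, zero_add] at hN0
    rw [P_zero, one_mul, ← hx] at hN0
    set Q : ℕ := ∏ i ∈ Finset.Icc (n + 1) (n + m), q i with hQ
    set Q0 : ℕ := ∏ i ∈ Finset.Icc 1 n, q i with hQ0
    have hQ2 : 2 ≤ Q := by
      have hmem : n + 1 ∈ Finset.Icc (n + 1) (n + m) := Finset.mem_Icc.2 ⟨le_refl _, by omega⟩
      have := Finset.single_le_prod' (f := q)
        (fun i hi => by have := hq i (by have := (Finset.mem_Icc.1 hi).1; omega); omega) hmem
      have h2 := hq (n + 1) (by omega)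
      omega
    have hQ0pos : 0 < Q0 := Finset.prod_pos fun i hi => by
      have := hq i (Finset.mem_Icc.1 hi).1; omega
    have hReq : P q n * cantorTail q ε n = P q (n + m) * cantorTail q ε (n + m) := by
      rw [P_split q n m, heq]; ring
    have hRn : ((Q : ℝ) - 1) * (P q n * cantorTail q ε n) = (N : ℝ) := by
      have h : P q n * cantorTail q ε n
          = (Q : ℝ) * (P q n * cantorTail q ε n) - (N : ℝ) :=
        calc P q n * cantorTail q ε n = P q (n + m) * cantorTail q ε (n + m) := hReq
          _ = (Q : ℝ) * (P q n * cantorTail q ε n) - (N : ℝ) := hN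
      linarith [h]
    have hQne : (Q : ℝ) - 1 ≠ 0 := by
      have : (2 : ℝ) ≤ (Q : ℝ) := by exact_mod_cast hQ2
      linarith
    have hQ0ne : (Q0 : ℝ) ≠ 0 := by positivity
    refine ⟨((N : ℚ) / ((Q : ℚ) - 1) + (N0 : ℚ)) / (Q0 : ℚ), ?_⟩
    have hRval : P q n * cantorTail q ε n = (N : ℝ) / ((Q : ℝ) - 1) := by
      field_simp at hRn ⊢
      linarith [hRn]
    have hxval : x = (P q n * cantorTail q ε n + (N0 : ℝ)) / (Q0 : ℝ) := by
      rw [hN0]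
      field_simp
      ring
    rw [hxval, hRval]
    push_cast
    ring
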